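/- arXiv:2112.15489 — 5 statements merged into one kernel-verified Lean document; each statement's English description precedes it below -/
import Mathlib

section
/- For any fixed unicast power P_un ∈ [0,P], the optimal value of the max–min fairness problem P1, i.e., the supremum of min_{j,k} SE_{jk} over all feasible points, equals (1 − (U+G)/T)·log₂(1 + Γ), where Γ = P_mu·N / (P·Σ_{j=1}^G K_j + Σ_{j=1}^G 1/Υ_j + Σ_{j=1}^G Σ_{t=1}^{K_j} 1/η_{jt}) and P_mu = P − P_un. -/
open Finset

noncomputable section

/-- Effective estimation quality `ξ_{jk} = τ q_{jk}^{up} η_{jk}² / (1 + Σ_t τ q_{jt}^{up} η_{jt})`. -/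
def xiMu {G : ℕ} {K : Fin G → ℕ} (η : ∀ j : Fin G, Fin (K j) → ℝ)
    (τ : ℕ) (qup : ∀ j : Fin G, Fin (K j) → ℝ) (j : Fin G) (k : Fin (K j)) : ℝ :=
  (τ : ℝ) * qup j k * (η j k) ^ 2 / (1 + ∑ t, (τ : ℝ) * qup j t * η j t)

/-- `SINR_{jk} = N q_j^{dl} ξ_{jk} / (1 + η_{jk} (P_un + Σ_i q_i^{dl}))`. -/
def sinrMu {G : ℕ} {K : Fin G → ℕ} (N : ℕ) (Pun : ℝ)
    (η : ∀ j : Fin G, Fin (K j) → ℝ) (τ : ℕ)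
    (qup : ∀ j : Fin G, Fin (K j) → ℝ) (qdl : Fin G → ℝ)
    (j : Fin G) (k : Fin (K j)) : ℝ :=
  (N : ℝ) * qdl j * xiMu η τ qup j k / (1 + η j k * (Pun + ∑ i, qdl i))

/-- `SE_{jk} = (1 - τ/T) log₂(1 + SINR_{jk})`. -/
def seMu {G : ℕ} {K : Fin G → ℕ} (N T : ℕ) (Pun : ℝ)
    (η : ∀ j : Fin G, Fin (K j) → ℝ) (τ : ℕ)
    (qup : ∀ j : Fin G, Fin (K j) → ℝ) (qdl : Fin G → ℝ)
    (j : Fin G) (k : Fin (K j)) : ℝ :=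
  (1 - (τ : ℝ) / (T : ℝ)) * Real.logb 2 (1 + sinrMu N Pun η τ qup qdl j k)

/-- The max–min fairness objective `min_{j,k} SE_{jk}` of problem P1. -/
def objMu {G : ℕ} {K : Fin G → ℕ} (N T : ℕ) (Pun : ℝ)
    (η : ∀ j : Fin G, Fin (K j) → ℝ) (τ : ℕ)
    (qup : ∀ j : Fin G, Fin (K j) → ℝ) (qdl : Fin G → ℝ) : ℝ :=
  ⨅ j : Fin G, ⨅ k : Fin (K j), seMu N T Pun η τ qup qdl j k

/-- Feasibility for problem P1 with fixed unicast power `Pun`. -/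
def feasMu {G : ℕ} {K : Fin G → ℕ} (U T : ℕ) (P Pun : ℝ)
    (E : ∀ j : Fin G, Fin (K j) → ℝ) (τ : ℕ)
    (qup : ∀ j : Fin G, Fin (K j) → ℝ) (qdl : Fin G → ℝ) : Prop :=
  U + G ≤ τ ∧ τ ≤ T ∧
    (∀ j k, 0 ≤ qup j k ∧ (τ : ℝ) * qup j k ≤ E j k) ∧
    (∀ j, 0 ≤ qdl j) ∧ ∑ j, qdl j ≤ P - Pun

/-- `Υ_j = min_k E_{jk} η_{jk}² / (1 + η_{jk} P)`. -/
def UpsMu {G : ℕ} {K : Fin G → ℕ} (P : ℝ)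
    (η E : ∀ j : Fin G, Fin (K j) → ℝ) (j : Fin G) : ℝ :=
  ⨅ k : Fin (K j), E j k * (η j k) ^ 2 / (1 + η j k * P)

/-- `Γ = P_mu N / (P Σ_j K_j + Σ_j 1/Υ_j + Σ_j Σ_t 1/η_{jt})` with `P_mu = P - P_un`. -/
def GamMu {G : ℕ} {K : Fin G → ℕ} (N : ℕ) (P Pun : ℝ)
    (η E : ∀ j : Fin G, Fin (K j) → ℝ) : ℝ :=
  (P - Pun) * (N : ℝ) /
    (P * ∑ j, (K j : ℝ) + ∑ j, 1 / UpsMu P η E j + ∑ j, ∑ t, 1 / η j t)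

/-- `x_{jk}* = Υ_j (1 + η_{jk} P) / η_{jk}²`. -/
def xStarMu {G : ℕ} {K : Fin G → ℕ} (P : ℝ)
    (η E : ∀ j : Fin G, Fin (K j) → ℝ) (j : Fin G) (k : Fin (K j)) : ℝ :=
  UpsMu P η E j * (1 + η j k * P) / (η j k) ^ 2

/-- `q_{jk}^{up*} = Υ_j (1 + η_{jk} P) / ((U+G) η_{jk}²)`. -/
def qupStarMu (U : ℕ) {G : ℕ} {K : Fin G → ℕ} (P : ℝ)
    (η E : ∀ j : Fin G, Fin (K j) → ℝ) (j : Fin G) (k : Fin (K j)) : ℝ :=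
  xStarMu P η E j k / ((U + G : ℕ) : ℝ)

/-- `q_j^{dl*} = (Γ/(N Υ_j)) (1 + Σ_t x_{jt}* η_{jt})`. -/
def qdlStarMu {G : ℕ} {K : Fin G → ℕ} (N : ℕ) (P Pun : ℝ)
    (η E : ∀ j : Fin G, Fin (K j) → ℝ) (j : Fin G) : ℝ :=
  GamMu N P Pun η E / ((N : ℝ) * UpsMu P η E j) * (1 + ∑ t, xStarMu P η E j t * η j t)


/-- In a nonempty finite family of reals the infimum is attained. -/
lemma fin_iInf_attained {n : ℕ} [Nonempty (Fin n)] (f : Fin n → ℝ) :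
    ∃ k, (⨅ i, f i) = f k ∧ ∀ i, f k ≤ f i := by
  obtain ⟨k, hk⟩ := Finite.exists_min f
  exact ⟨k, le_antisymm (ciInf_le (Finite.bddBelow_range f) k) (le_ciInf hk), hk⟩

set_option maxHeartbeats 4000000 in
/-- Theorem 1 of the paper, optimal value of P1: for any fixed
unicast power `P_un ∈ [0,P]`, the supremum of `min_{j,k} SE_{jk}` over all feasible
points of P1 equals `(1 - (U+G)/T) log₂(1 + Γ)`. -/
theorem mmf_optimal_value
    (U G : ℕ) (hG : 1 ≤ G) (K : Fin G → ℕ) (hK : ∀ j, 1 ≤ K j)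
    (N : ℕ) (hN : 1 ≤ N) (T : ℕ) (hT : U + G ≤ T)
    (P : ℝ) (hP : 0 < P)
    (η E : ∀ j : Fin G, Fin (K j) → ℝ)
    (hη : ∀ j k, 0 < η j k) (hE : ∀ j k, 0 < E j k)
    (Pun : ℝ) (hPun0 : 0 ≤ Pun) (hPunP : Pun ≤ P) :
    sSup {v : ℝ | ∃ (τ : ℕ) (qup : ∀ j : Fin G, Fin (K j) → ℝ) (qdl : Fin G → ℝ),
        feasMu U T P Pun E τ qup qdl ∧ v = objMu N T Pun η τ qup qdl}
      = (1 - ((U + G : ℕ) : ℝ) / (T : ℝ)) * Real.logb 2 (1 + GamMu N P Pun η E) := by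
  haveI : Nonempty (Fin G) := ⟨⟨0, hG⟩⟩
  have inst : ∀ j, Nonempty (Fin (K j)) := fun j => ⟨⟨0, hK j⟩⟩
  have hT0 : (0:ℝ) < (T:ℝ) := by
    have : 0 < T := by omega
    exact_mod_cast this
  have hN0 : (0:ℝ) < (N:ℝ) := by exact_mod_cast (by omega : 0 < N)
  have hPmu0 : (0:ℝ) ≤ P - Pun := sub_nonneg.mpr hPunP
  -- the infimum defining Υ_j is attained at some k₁ j
  have hatt : ∀ j, ∃ k, UpsMu P η E j = E j k * (η j k) ^ 2 / (1 + η j k * P) ∧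
      ∀ i, E j k * (η j k) ^ 2 / (1 + η j k * P) ≤ E j i * (η j i) ^ 2 / (1 + η j i * P) := by
    intro j; haveI := inst j; exact fin_iInf_attained _
  choose k₁ hk₁ hk₁min using hatt
  have h1ηP : ∀ j k, (0:ℝ) < 1 + η j k * P := by
    intro j k; have := hη j k; nlinarith
  have hUpos : ∀ j, 0 < UpsMu P η E j := by
    intro j; rw [hk₁ j]
    have h1 := hη j (k₁ j); have h2 := hE j (k₁ j); have h3 := h1ηP j (k₁ j)
    positivity
  have hUle : ∀ j k, UpsMu P η E j * (1 + η j k * P) ≤ E j k * (η j k) ^ 2 := by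
    intro j k
    have h2 : UpsMu P η E j ≤ E j k * (η j k) ^ 2 / (1 + η j k * P) := by
      rw [hk₁ j]; exact hk₁min j k
    exact (le_div_iff₀ (h1ηP j k)).mp h2
  set Dv : ℝ := P * ∑ j, (K j : ℝ) + ∑ j, 1 / UpsMu P η E j + ∑ j, ∑ t, 1 / η j t with hDvdef
  have hGamDef : GamMu N P Pun η E = (P - Pun) * (N:ℝ) / Dv := by rw [hDvdef]; rfl
  have hDpos : 0 < Dv := by
    rw [hDvdef]
    have h1 : 0 ≤ P * ∑ j, (K j : ℝ) := by positivity
    have h2 : 0 < ∑ j, 1 / UpsMu P η E j :=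
      Finset.sum_pos (fun j _ => by have := hUpos j; positivity) Finset.univ_nonempty
    have h3 : 0 ≤ ∑ j, ∑ t, 1 / η j t :=
      Finset.sum_nonneg fun j _ => Finset.sum_nonneg fun t _ => by have := hη j t; positivity
    linarith
  have hGam0 : 0 ≤ GamMu N P Pun η E := by
    rw [hGamDef]; exact div_nonneg (by positivity) hDpos.le
  set Vstar : ℝ := (1 - ((U + G : ℕ) : ℝ) / (T : ℝ)) * Real.logb 2 (1 + GamMu N P Pun η E)
    with hVstar
  -- ===================== Part A : Vstar is attained =====================
  have hUGR : (0:ℝ) < ((U + G : ℕ) : ℝ) := by exact_mod_cast (by omega : 0 < U + G)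
  have hxpos : ∀ j k, 0 < xStarMu P η E j k := by
    intro j k; rw [xStarMu]
    have := hUpos j; have := hη j k; have := h1ηP j k; positivity
  have hxE : ∀ j k, xStarMu P η E j k ≤ E j k := by
    intro j k
    rw [xStarMu, div_le_iff₀ (by have := hη j k; positivity : (0:ℝ) < (η j k) ^ 2)]
    exact hUle j k
  have hτq : ∀ j k, ((U + G : ℕ) : ℝ) * qupStarMu U P η E j k = xStarMu P η E j k := by
    intro j k; rw [qupStarMu]; exact mul_div_cancel₀ _ hUGR.ne'
  have hSpos : ∀ j, (0:ℝ) < 1 + ∑ t, xStarMu P η E j t * η j t := by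
    intro j
    have : 0 ≤ ∑ t, xStarMu P η E j t * η j t :=
      Finset.sum_nonneg fun t _ => mul_nonneg (hxpos j t).le (hη j t).le
    linarith
  have hSsum : ∀ j, (∑ t, xStarMu P η E j t * η j t)
      = UpsMu P η E j * ((∑ t, 1 / η j t) + P * (K j : ℝ)) := by
    intro j
    have hterm : ∀ t, xStarMu P η E j t * η j t = UpsMu P η E j * (1 / η j t + P) := by
      intro t; rw [xStarMu]
      have hne := (hη j t).ne'
      field_simp
    rw [Finset.sum_congr rfl fun t _ => hterm t, ← Finset.mul_sum, Finset.sum_add_distrib,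
      Finset.sum_const, Finset.card_univ, Fintype.card_fin, nsmul_eq_mul]
    ring
  have hqdl_eq : ∀ j, qdlStarMu N P Pun η E j
      = GamMu N P Pun η E / (N:ℝ) * (1 / UpsMu P η E j + ((∑ t, 1 / η j t) + P * (K j : ℝ))) := by
    intro j
    have hU := (hUpos j).ne'
    have hCU : 1 / UpsMu P η E j + ((∑ t, 1 / η j t) + P * (K j : ℝ))
        = (1 + UpsMu P η E j * ((∑ t, 1 / η j t) + P * (K j : ℝ))) / UpsMu P η E j := by
      field_simp
    rw [qdlStarMu, hSsum j, hCU, div_mul_div_comm, div_mul_eq_mul_div]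
  have hQstar : ∑ j, qdlStarMu N P Pun η E j = P - Pun := by
    rw [Finset.sum_congr rfl fun j _ => hqdl_eq j, ← Finset.mul_sum]
    have hsum : ∑ j, (1 / UpsMu P η E j + ((∑ t, 1 / η j t) + P * (K j : ℝ))) = Dv := by
      rw [hDvdef, Finset.sum_add_distrib, Finset.sum_add_distrib, ← Finset.mul_sum]
      ring
    rw [hsum, hGamDef]
    field_simp
  have hqdl0 : ∀ j, 0 ≤ qdlStarMu N P Pun η E j := by
    intro j
    rw [qdlStarMu]
    exact mul_nonneg (div_nonneg hGam0 (by have := hUpos j; positivity)) (hSpos j).le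
  have hxi : ∀ j k, xiMu η (U + G) (qupStarMu U P η E) j k
      = UpsMu P η E j * (1 + η j k * P) / (1 + ∑ t, xStarMu P η E j t * η j t) := by
    intro j k
    rw [xiMu]
    have hnum : ((U + G : ℕ) : ℝ) * qupStarMu U P η E j k * (η j k) ^ 2
        = UpsMu P η E j * (1 + η j k * P) := by
      rw [hτq, xStarMu, div_mul_cancel₀ _ (pow_ne_zero 2 (hη j k).ne')]
    have hden : (∑ t, ((U + G : ℕ) : ℝ) * qupStarMu U P η E j t * η j t)
        = ∑ t, xStarMu P η E j t * η j t :=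
      Finset.sum_congr rfl fun t _ => by rw [hτq]
    rw [hnum, hden]
  have hsinrA : ∀ j k, sinrMu N Pun η (U + G) (qupStarMu U P η E) (qdlStarMu N P Pun η E) j k
      = GamMu N P Pun η E := by
    intro j k
    rw [sinrMu, hxi, hQstar, qdlStarMu]
    have hPP : Pun + (P - Pun) = P := by ring
    rw [hPP]
    have hU := (hUpos j).ne'
    have hS := (hSpos j).ne'
    have hη1 := (h1ηP j k).ne'
    field_simp
  have hse : ∀ j k, seMu N T Pun η (U + G) (qupStarMu U P η E) (qdlStarMu N P Pun η E) j k
      = Vstar := by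
    intro j k
    rw [seMu, hsinrA j k, hVstar]
  have hobjA : objMu N T Pun η (U + G) (qupStarMu U P η E) (qdlStarMu N P Pun η E) = Vstar := by
    rw [objMu]
    have h1 : ∀ j : Fin G,
        (⨅ k : Fin (K j), seMu N T Pun η (U + G) (qupStarMu U P η E) (qdlStarMu N P Pun η E) j k)
          = Vstar := by
      intro j; haveI := inst j
      simp only [hse]
      exact ciInf_const
    simp only [h1]
    exact ciInf_const
  have hmemA : Vstar ∈ {v : ℝ | ∃ (τ : ℕ) (qup : ∀ j : Fin G, Fin (K j) → ℝ) (qdl : Fin G → ℝ),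
      feasMu U T P Pun E τ qup qdl ∧ v = objMu N T Pun η τ qup qdl} := by
    refine ⟨U + G, qupStarMu U P η E, qdlStarMu N P Pun η E, ⟨le_refl _, hT, ?_, hqdl0,
      le_of_eq hQstar⟩, hobjA.symm⟩
    intro j k
    constructor
    · rw [qupStarMu]
      exact div_nonneg (hxpos j k).le hUGR.le
    · rw [hτq j k]
      exact hxE j k
  -- ===================== Part B : Vstar is an upper bound =====================
  have hub : ∀ v ∈ {v : ℝ | ∃ (τ : ℕ) (qup : ∀ j : Fin G, Fin (K j) → ℝ) (qdl : Fin G → ℝ),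
      feasMu U T P Pun E τ qup qdl ∧ v = objMu N T Pun η τ qup qdl}, v ≤ Vstar := by
    rintro v ⟨τ, qup, qdl, ⟨hτ1, hτ2, hup, hdl, hQle⟩, rfl⟩
    have hQ0 : (0:ℝ) ≤ ∑ i, qdl i := Finset.sum_nonneg fun i _ => hdl i
    have hxnn : ∀ j k, (0:ℝ) ≤ (τ:ℝ) * qup j k :=
      fun j k => mul_nonneg (Nat.cast_nonneg τ) (hup j k).1
    have hd1 : ∀ j k, (0:ℝ) < 1 + η j k * (Pun + ∑ i, qdl i) := by
      intro j k
      have h1 : 0 ≤ η j k * (Pun + ∑ i, qdl i) :=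
        mul_nonneg (hη j k).le (add_nonneg hPun0 hQ0)
      linarith
    have hd2 : ∀ j, (0:ℝ) < 1 + ∑ t, (τ:ℝ) * qup j t * η j t := by
      intro j
      have h1 : 0 ≤ ∑ t, (τ:ℝ) * qup j t * η j t :=
        Finset.sum_nonneg fun t _ => mul_nonneg (hxnn j t) (hη j t).le
      linarith
    have hsinr0 : ∀ j k, 0 ≤ sinrMu N Pun η τ qup qdl j k := by
      intro j k
      rw [sinrMu]
      refine div_nonneg (mul_nonneg (mul_nonneg hN0.le (hdl j)) ?_) (hd1 j k).le
      rw [xiMu]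
      exact div_nonneg (mul_nonneg (hxnn j k) (sq_nonneg _)) (hd2 j).le
    have hex : ∃ j k, sinrMu N Pun η τ qup qdl j k ≤ GamMu N P Pun η E := by
      by_contra hcon
      push_neg at hcon
      -- strict inequalities, cleared of denominators
      have hstrict : ∀ j k, GamMu N P Pun η E * (1 + η j k * (Pun + ∑ i, qdl i))
          * (1 + ∑ t, (τ:ℝ) * qup j t * η j t)
          < (N:ℝ) * qdl j * ((τ:ℝ) * qup j k * (η j k) ^ 2) := by
        intro j k
        have h := hcon j k
        rw [sinrMu, xiMu, lt_div_iff₀ (hd1 j k), ← mul_div_assoc,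
          lt_div_iff₀ (hd2 j)] at h
        -- h : Γ * (1 + ...) * (1 + Σ ...) < ... 
        nlinarith [h]
      have hqdlpos : ∀ j, 0 < qdl j := by
        intro j
        have h := hstrict j (k₁ j)
        have h0 : 0 ≤ GamMu N P Pun η E * (1 + η j (k₁ j) * (Pun + ∑ i, qdl i))
            * (1 + ∑ t, (τ:ℝ) * qup j t * η j t) :=
          mul_nonneg (mul_nonneg hGam0 (hd1 j (k₁ j)).le) (hd2 j).le
        by_contra hq
        push_neg at hq
        have ha : (0:ℝ) ≤ (τ:ℝ) * qup j (k₁ j) * (η j (k₁ j)) ^ 2 :=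
          mul_nonneg (hxnn j (k₁ j)) (sq_nonneg _)
        nlinarith [mul_nonneg (mul_nonneg hN0.le (neg_nonneg.mpr hq)) ha]
      have hxpos' : ∀ j k, 0 < (τ:ℝ) * qup j k := by
        intro j k
        have h := hstrict j k
        have h0 : 0 ≤ GamMu N P Pun η E * (1 + η j k * (Pun + ∑ i, qdl i))
            * (1 + ∑ t, (τ:ℝ) * qup j t * η j t) :=
          mul_nonneg (mul_nonneg hGam0 (hd1 j k).le) (hd2 j).le
        by_contra hx
        push_neg at hx
        have hb : (0:ℝ) ≤ (N:ℝ) * qdl j := mul_nonneg hN0.le (hqdlpos j).le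
        have h1 : (τ:ℝ) * qup j k * (η j k) ^ 2 ≤ 0 :=
          mul_nonpos_of_nonpos_of_nonneg hx (sq_nonneg _)
        have h2 := mul_le_mul_of_nonneg_left h1 hb
        rw [mul_zero] at h2
        linarith
      -- per-group lower bound on N * qdl j
      have hgrp : ∀ j, GamMu N P Pun η E *
          ((1 + η j (k₁ j) * (Pun + ∑ i, qdl i)) / (E j (k₁ j) * (η j (k₁ j)) ^ 2)
            + ∑ t, (1 + η j t * (Pun + ∑ i, qdl i)) / η j t)
          < (N:ℝ) * qdl j := by
        intro j
        haveI := inst j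
        obtain ⟨k₀, hmax⟩ := Finite.exists_max
          (fun k : Fin (K j) =>
            (1 + η j k * (Pun + ∑ i, qdl i)) / ((τ:ℝ) * qup j k * (η j k) ^ 2))
        have hmax' : ∀ t : Fin (K j),
            (1 + η j t * (Pun + ∑ i, qdl i)) / ((τ:ℝ) * qup j t * (η j t) ^ 2)
            ≤ (1 + η j k₀ * (Pun + ∑ i, qdl i)) / ((τ:ℝ) * qup j k₀ * (η j k₀) ^ 2) :=
          fun t => hmax t
        clear hmax
        have hc0 : (0:ℝ) < (τ:ℝ) * qup j k₀ * (η j k₀) ^ 2 := by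
          have := hxpos' j k₀; have := hη j k₀; positivity
        have hMd2 : GamMu N P Pun η E *
            ((1 + η j k₀ * (Pun + ∑ i, qdl i)) / ((τ:ℝ) * qup j k₀ * (η j k₀) ^ 2))
            * (1 + ∑ t, (τ:ℝ) * qup j t * η j t) < (N:ℝ) * qdl j := by
          have heq : GamMu N P Pun η E *
              ((1 + η j k₀ * (Pun + ∑ i, qdl i)) / ((τ:ℝ) * qup j k₀ * (η j k₀) ^ 2))
              * (1 + ∑ t, (τ:ℝ) * qup j t * η j t)
              = GamMu N P Pun η E * (1 + η j k₀ * (Pun + ∑ i, qdl i))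
                * (1 + ∑ t, (τ:ℝ) * qup j t * η j t) / ((τ:ℝ) * qup j k₀ * (η j k₀) ^ 2) := by
            ring
          rw [heq, div_lt_iff₀ hc0]
          exact hstrict j k₀
        have hB : (1 + η j (k₁ j) * (Pun + ∑ i, qdl i)) / (E j (k₁ j) * (η j (k₁ j)) ^ 2)
            + (∑ t, (1 + η j t * (Pun + ∑ i, qdl i)) / η j t)
            ≤ ((1 + η j k₀ * (Pun + ∑ i, qdl i)) / ((τ:ℝ) * qup j k₀ * (η j k₀) ^ 2))
              * (1 + ∑ t, (τ:ℝ) * qup j t * η j t) := by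
          have h1 : (1 + η j (k₁ j) * (Pun + ∑ i, qdl i)) / (E j (k₁ j) * (η j (k₁ j)) ^ 2)
              ≤ (1 + η j k₀ * (Pun + ∑ i, qdl i)) / ((τ:ℝ) * qup j k₀ * (η j k₀) ^ 2) := by
            refine le_trans ?_ (hmax' (k₁ j))
            have ha : (0:ℝ) ≤ 1 + η j (k₁ j) * (Pun + ∑ i, qdl i) := (hd1 j (k₁ j)).le
            have hb : (0:ℝ) < (τ:ℝ) * qup j (k₁ j) * (η j (k₁ j)) ^ 2 := by
              have := hxpos' j (k₁ j); have := hη j (k₁ j); positivity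
            have hbc : (τ:ℝ) * qup j (k₁ j) * (η j (k₁ j)) ^ 2
                ≤ E j (k₁ j) * (η j (k₁ j)) ^ 2 :=
              mul_le_mul_of_nonneg_right (hup j (k₁ j)).2 (sq_nonneg _)
            exact div_le_div_of_nonneg_left ha hb hbc
          have h2 : ∀ t : Fin (K j), (1 + η j t * (Pun + ∑ i, qdl i)) / η j t
              ≤ ((1 + η j k₀ * (Pun + ∑ i, qdl i)) / ((τ:ℝ) * qup j k₀ * (η j k₀) ^ 2))
                * ((τ:ℝ) * qup j t * η j t) := by
            intro t
            have hb : (0:ℝ) < (τ:ℝ) * qup j t * (η j t) ^ 2 := by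
              have := hxpos' j t; have := hη j t; positivity
            have hm' := (div_le_iff₀ hb).mp (hmax' t)
            rw [div_le_iff₀ (hη j t)]
            nlinarith [hm']
          calc (1 + η j (k₁ j) * (Pun + ∑ i, qdl i)) / (E j (k₁ j) * (η j (k₁ j)) ^ 2)
              + (∑ t, (1 + η j t * (Pun + ∑ i, qdl i)) / η j t)
              ≤ ((1 + η j k₀ * (Pun + ∑ i, qdl i)) / ((τ:ℝ) * qup j k₀ * (η j k₀) ^ 2))
                + ∑ t, ((1 + η j k₀ * (Pun + ∑ i, qdl i)) / ((τ:ℝ) * qup j k₀ * (η j k₀) ^ 2))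
                  * ((τ:ℝ) * qup j t * η j t) :=
                add_le_add h1 (Finset.sum_le_sum fun t _ => h2 t)
            _ = ((1 + η j k₀ * (Pun + ∑ i, qdl i)) / ((τ:ℝ) * qup j k₀ * (η j k₀) ^ 2))
                * (1 + ∑ t, (τ:ℝ) * qup j t * η j t) := by
                rw [← Finset.mul_sum]; ring
        calc GamMu N P Pun η E *
            ((1 + η j (k₁ j) * (Pun + ∑ i, qdl i)) / (E j (k₁ j) * (η j (k₁ j)) ^ 2)
              + ∑ t, (1 + η j t * (Pun + ∑ i, qdl i)) / η j t)
            ≤ GamMu N P Pun η E *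
              (((1 + η j k₀ * (Pun + ∑ i, qdl i)) / ((τ:ℝ) * qup j k₀ * (η j k₀) ^ 2))
                * (1 + ∑ t, (τ:ℝ) * qup j t * η j t)) :=
              mul_le_mul_of_nonneg_left hB hGam0
          _ = GamMu N P Pun η E *
              ((1 + η j k₀ * (Pun + ∑ i, qdl i)) / ((τ:ℝ) * qup j k₀ * (η j k₀) ^ 2))
              * (1 + ∑ t, (τ:ℝ) * qup j t * η j t) := by ring
          _ < (N:ℝ) * qdl j := hMd2
      -- summing over groups
      have hsumlt : GamMu N P Pun η E *
          (∑ j, ((1 + η j (k₁ j) * (Pun + ∑ i, qdl i)) / (E j (k₁ j) * (η j (k₁ j)) ^ 2)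
            + ∑ t, (1 + η j t * (Pun + ∑ i, qdl i)) / η j t))
          < (N:ℝ) * (∑ i, qdl i) := by
        rw [Finset.mul_sum, Finset.mul_sum]
        exact Finset.sum_lt_sum_of_nonempty Finset.univ_nonempty fun j _ => hgrp j
      -- cross-multiplied comparison: the sum is bounded the other way
      have hkey : (∑ i, qdl i) * Dv ≤ (P - Pun) *
          (∑ j, ((1 + η j (k₁ j) * (Pun + ∑ i, qdl i)) / (E j (k₁ j) * (η j (k₁ j)) ^ 2)
            + ∑ t, (1 + η j t * (Pun + ∑ i, qdl i)) / η j t)) := by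
        have hDsum : Dv = ∑ j, (P * (K j : ℝ) + 1 / UpsMu P η E j + ∑ t, 1 / η j t) := by
          rw [hDvdef, Finset.sum_add_distrib, Finset.sum_add_distrib, ← Finset.mul_sum]
        rw [hDsum, Finset.mul_sum, Finset.mul_sum]
        refine Finset.sum_le_sum fun j _ => ?_
        have hc : ∑ t, (1 + η j t * (Pun + ∑ i, qdl i)) / η j t
            = (∑ t, 1 / η j t) + (Pun + ∑ i, qdl i) * (K j : ℝ) := by
          have hterm : ∀ t, (1 + η j t * (Pun + ∑ i, qdl i)) / η j t
              = 1 / η j t + (Pun + ∑ i, qdl i) := by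
            intro t
            rw [add_div, mul_div_cancel_left₀ _ (hη j t).ne']
          rw [Finset.sum_congr rfl fun t _ => hterm t, Finset.sum_add_distrib,
            Finset.sum_const, Finset.card_univ, Fintype.card_fin, nsmul_eq_mul]
          ring
        rw [hc]
        have hU1 : 1 / UpsMu P η E j
            = (1 + η j (k₁ j) * P) / (E j (k₁ j) * (η j (k₁ j)) ^ 2) := by
          rw [hk₁ j, one_div_div]
        rw [hU1]
        have hdpos : (0:ℝ) < E j (k₁ j) * (η j (k₁ j)) ^ 2 := by
          have := hE j (k₁ j); have := hη j (k₁ j); positivity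
        have hnum : (∑ i, qdl i) * (1 + η j (k₁ j) * P)
            ≤ (P - Pun) * (1 + η j (k₁ j) * (Pun + ∑ i, qdl i)) := by
          nlinarith [mul_nonneg (sub_nonneg.mpr hQle)
            (by nlinarith [hη j (k₁ j), hPun0] : (0:ℝ) ≤ 1 + η j (k₁ j) * Pun), hη j (k₁ j)]
        have hfrac : (∑ i, qdl i) * ((1 + η j (k₁ j) * P) / (E j (k₁ j) * (η j (k₁ j)) ^ 2))
            ≤ (P - Pun) * ((1 + η j (k₁ j) * (Pun + ∑ i, qdl i))
              / (E j (k₁ j) * (η j (k₁ j)) ^ 2)) := by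
          rw [← mul_div_assoc, ← mul_div_assoc]
          exact (div_le_div_iff_of_pos_right hdpos).mpr hnum
        have hPP : (∑ i, qdl i) * P ≤ (P - Pun) * (Pun + ∑ i, qdl i) := by
          nlinarith [mul_nonneg (sub_nonneg.mpr hQle) hPun0]
        have hceta : (0:ℝ) ≤ ∑ t, 1 / η j t :=
          Finset.sum_nonneg fun t _ => by have := hη j t; positivity
        have hKnn : (0:ℝ) ≤ (K j : ℝ) := Nat.cast_nonneg _
        nlinarith [hfrac, mul_le_mul_of_nonneg_right hPP hKnn,
          mul_le_mul_of_nonneg_right hQle hceta]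
      have hfin : (N:ℝ) * (∑ i, qdl i) ≤ GamMu N P Pun η E *
          (∑ j, ((1 + η j (k₁ j) * (Pun + ∑ i, qdl i)) / (E j (k₁ j) * (η j (k₁ j)) ^ 2)
            + ∑ t, (1 + η j t * (Pun + ∑ i, qdl i)) / η j t)) := by
        rw [hGamDef, div_mul_eq_mul_div, le_div_iff₀ hDpos]
        calc (N:ℝ) * (∑ i, qdl i) * Dv = (N:ℝ) * ((∑ i, qdl i) * Dv) := by ring
          _ ≤ (N:ℝ) * ((P - Pun) *
              (∑ j, ((1 + η j (k₁ j) * (Pun + ∑ i, qdl i)) / (E j (k₁ j) * (η j (k₁ j)) ^ 2)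
                + ∑ t, (1 + η j t * (Pun + ∑ i, qdl i)) / η j t))) :=
            mul_le_mul_of_nonneg_left hkey hN0.le
          _ = (P - Pun) * (N:ℝ) *
              (∑ j, ((1 + η j (k₁ j) * (Pun + ∑ i, qdl i)) / (E j (k₁ j) * (η j (k₁ j)) ^ 2)
                + ∑ t, (1 + η j t * (Pun + ∑ i, qdl i)) / η j t)) := by ring
      exact absurd hfin (not_le.mpr hsumlt)
    obtain ⟨j₀, k₀, hjk⟩ := hex
    have hb1 : objMu N T Pun η τ qup qdl ≤ seMu N T Pun η τ qup qdl j₀ k₀ := by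
      rw [objMu]
      have l1 : (⨅ j, ⨅ k, seMu N T Pun η τ qup qdl j k)
          ≤ ⨅ k, seMu N T Pun η τ qup qdl j₀ k :=
        ciInf_le (Finite.bddBelow_range _) j₀
      have l2 : (⨅ k, seMu N T Pun η τ qup qdl j₀ k) ≤ seMu N T Pun η τ qup qdl j₀ k₀ := by
        haveI := inst j₀
        exact ciInf_le (Finite.bddBelow_range _) k₀
      exact le_trans l1 l2
    have hb2 : seMu N T Pun η τ qup qdl j₀ k₀ ≤ Vstar := by
      rw [seMu, hVstar]
      have hτT : (τ:ℝ) ≤ (T:ℝ) := by exact_mod_cast hτ2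
      have hUGτ : ((U + G : ℕ) : ℝ) ≤ (τ:ℝ) := by exact_mod_cast hτ1
      have hs0 := hsinr0 j₀ k₀
      have hl1 : (0:ℝ) < 1 + sinrMu N Pun η τ qup qdl j₀ k₀ := by linarith
      refine mul_le_mul ?_ ?_ ?_ ?_
      · have : ((U + G : ℕ) : ℝ) / (T:ℝ) ≤ (τ:ℝ) / (T:ℝ) := by gcongr
        linarith
      · gcongr <;> norm_num
      · exact Real.logb_nonneg one_lt_two (by linarith)
      · have : ((U + G : ℕ) : ℝ) / (T:ℝ) ≤ 1 := by
          rw [div_le_one hT0]; exact_mod_cast hT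
        linarith
    linarith
  -- ===================== conclusion =====================
  exact le_antisymm (csSup_le ⟨Vstar, hmemA⟩ hub) (le_csSup ⟨Vstar, hub⟩ hmemA)
end
end

section
/- For any fixed unicast power P_un ∈ [0,P], the point given by τ* = U+G, q_{jk}^{up*} = Υ_j (1 + η_{jk} P) / ((U+G) η_{jk}²), and q_j^{dl*} = (Γ/(N Υ_j))·(1 + Σ_{t=1}^{K_j} x_{jt}* η_{jt}) with x_{jk}* = Υ_j (1 + η_{jk} P)/η_{jk}², is a feasible point of P1 with Σ_{j=1}^G q_j^{dl*} = P_mu, and its objective value min_{j,k} SE_{jk} equals (1 − (U+G)/T)·log₂(1 + Γ). -/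
open Finset

noncomputable section

/-- for any fixed unicast power `P_un ∈ [0,P]`, the point
`τ* = U+G`, `q_{jk}^{up*} = Υ_j (1+η_{jk}P)/((U+G) η_{jk}²)`,
`q_j^{dl*} = (Γ/(N Υ_j))(1 + Σ_t x_{jt}* η_{jt})` is feasible for P1, uses the
full multicast power `P_mu = P - P_un`, and attains the objective value
`(1 - (U+G)/T) log₂(1 + Γ)`. -/
theorem mmf_optimal_point_feasible_and_attains
    (U G : ℕ) (hG : 1 ≤ G) (K : Fin G → ℕ) (hK : ∀ j, 1 ≤ K j)
    (N : ℕ) (hN : 1 ≤ N) (T : ℕ) (hT : U + G ≤ T)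
    (P : ℝ) (hP : 0 < P)
    (η E : ∀ j : Fin G, Fin (K j) → ℝ)
    (hη : ∀ j k, 0 < η j k) (hE : ∀ j k, 0 < E j k)
    (Pun : ℝ) (hPun0 : 0 ≤ Pun) (hPunP : Pun ≤ P) :
    feasMu U T P Pun E (U + G) (qupStarMu U P η E) (qdlStarMu N P Pun η E) ∧
    (∑ j, qdlStarMu N P Pun η E j = P - Pun) ∧
    objMu N T Pun η (U + G) (qupStarMu U P η E) (qdlStarMu N P Pun η E)
      = (1 - ((U + G : ℕ) : ℝ) / (T : ℝ)) * Real.logb 2 (1 + GamMu N P Pun η E) := by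
  haveI hneG : Nonempty (Fin G) := ⟨⟨0, hG⟩⟩
  haveI hne : ∀ j : Fin G, Nonempty (Fin (K j)) := fun j => ⟨⟨0, hK j⟩⟩
  have hUG : (0:ℝ) < ((U + G : ℕ) : ℝ) := by
    have : 1 ≤ U + G := le_trans hG (Nat.le_add_left G U)
    exact_mod_cast this
  have hNR : (0:ℝ) < (N : ℝ) := by exact_mod_cast hN
  have hden : ∀ j k, (0:ℝ) < 1 + η j k * P := fun j k => by
    have := hη j k; nlinarith
  -- Υ_j is positive and is a lower bound
  have hUps_le : ∀ j k, UpsMu P η E j ≤ E j k * (η j k) ^ 2 / (1 + η j k * P) :=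
    fun j k => ciInf_le (Finite.bddBelow_range _) k
  have hUps_pos : ∀ j, 0 < UpsMu P η E j := by
    intro j
    have hpos : ∀ k : Fin (K j), 0 < E j k * (η j k) ^ 2 / (1 + η j k * P) := fun k => by
      have h1 := hE j k; have h2 := hη j k; have h3 := hden j k; positivity
    obtain ⟨k0, hk0⟩ := Finite.exists_min (fun k : Fin (K j) =>
      E j k * (η j k) ^ 2 / (1 + η j k * P))
    have : UpsMu P η E j = E j k0 * (η j k0) ^ 2 / (1 + η j k0 * P) :=
      le_antisymm (hUps_le j k0) (le_ciInf hk0)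
    rw [this]; exact hpos k0
  -- denominator D of Γ
  set D : ℝ := P * ∑ j, (K j : ℝ) + ∑ j, 1 / UpsMu P η E j + ∑ j, ∑ t, 1 / η j t with hD_def
  have hD_pos : 0 < D := by
    have h1 : 0 < ∑ j, (K j : ℝ) :=
      Finset.sum_pos (fun j _ => by exact_mod_cast hK j) Finset.univ_nonempty
    have h2 : 0 ≤ ∑ j, 1 / UpsMu P η E j :=
      Finset.sum_nonneg fun j _ => one_div_nonneg.mpr (le_of_lt (hUps_pos j))
    have h3 : 0 ≤ ∑ j : Fin G, ∑ t, 1 / η j t :=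
      Finset.sum_nonneg fun j _ => Finset.sum_nonneg fun t _ => by
        have := hη j t; positivity
    have h4 := mul_pos hP h1
    rw [hD_def]
    linarith
  have hGam_eq : GamMu N P Pun η E = (P - Pun) * (N : ℝ) / D := rfl
  have hGam_nonneg : 0 ≤ GamMu N P Pun η E := by
    rw [hGam_eq]
    have : 0 ≤ P - Pun := by linarith
    positivity
  -- x* facts
  have hx_nonneg : ∀ j k, 0 ≤ xStarMu P η E j k := fun j k => by
    have h1 := hUps_pos j; have h2 := hden j k; have h3 := hη j k
    rw [xStarMu]; positivity
  have hxeta : ∀ j k, xStarMu P η E j k * (η j k) ^ 2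
      = UpsMu P η E j * (1 + η j k * P) := fun j k => by
    rw [xStarMu, div_mul_cancel₀ _ (pow_ne_zero 2 (ne_of_gt (hη j k)))]
  have hS_eq : ∀ j, ∑ t, xStarMu P η E j t * η j t
      = UpsMu P η E j * ((∑ t, 1 / η j t) + (K j : ℝ) * P) := by
    intro j
    have : ∀ t : Fin (K j), xStarMu P η E j t * η j t
        = UpsMu P η E j * (1 / η j t) + UpsMu P η E j * P := by
      intro t
      have hη2 : η j t ≠ 0 := ne_of_gt (hη j t)
      rw [xStarMu]; field_simp
    rw [Finset.sum_congr rfl fun t _ => this t, Finset.sum_add_distrib,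
      ← Finset.mul_sum, Finset.sum_const, Finset.card_univ, Fintype.card_fin,
      nsmul_eq_mul]
    ring
  have hS_nonneg : ∀ j, 0 ≤ ∑ t, xStarMu P η E j t * η j t := fun j =>
    Finset.sum_nonneg fun t _ => mul_nonneg (hx_nonneg j t) (le_of_lt (hη j t))
  have h1S_pos : ∀ j, (0:ℝ) < 1 + ∑ t, xStarMu P η E j t * η j t := fun j => by
    have := hS_nonneg j; linarith
  -- qdl* in closed form
  have hqdl_eq : ∀ j, qdlStarMu N P Pun η E j
      = GamMu N P Pun η E / (N : ℝ) * (1 / UpsMu P η E j + (∑ t, 1 / η j t) + (K j : ℝ) * P) := by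
    intro j
    have hU := ne_of_gt (hUps_pos j)
    rw [qdlStarMu, hS_eq j]
    simp only [one_div]
    field_simp
    ring
  -- total downlink power equals P - Pun
  have hsum : ∑ j, qdlStarMu N P Pun η E j = P - Pun := by
    rw [Finset.sum_congr rfl fun j _ => hqdl_eq j, ← Finset.mul_sum]
    have hsum2 : ∑ j, (1 / UpsMu P η E j + (∑ t, 1 / η j t) + (K j : ℝ) * P) = D := by
      rw [Finset.sum_add_distrib, Finset.sum_add_distrib, ← Finset.sum_mul, hD_def]
      ring
    rw [hsum2, hGam_eq]
    field_simp
  -- each SINR equals Γ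
  have hτq : ∀ j k, ((U + G : ℕ) : ℝ) * qupStarMu U P η E j k = xStarMu P η E j k := by
    intro j k
    rw [qupStarMu]
    field_simp
  have hsinr : ∀ j k, sinrMu N Pun η (U + G) (qupStarMu U P η E) (qdlStarMu N P Pun η E) j k
      = GamMu N P Pun η E := by
    intro j k
    have hU := ne_of_gt (hUps_pos j)
    have h1S := ne_of_gt (h1S_pos j)
    have hd := ne_of_gt (hden j k)
    rw [sinrMu, xiMu, hsum]
    have hsc : ∑ t, ((U + G : ℕ) : ℝ) * qupStarMu U P η E j t * η j t
        = ∑ t, xStarMu P η E j t * η j t :=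
      Finset.sum_congr rfl fun t _ => by rw [hτq j t]
    rw [hsc, hτq j k, hxeta j k, qdlStarMu]
    have hPP : Pun + (P - Pun) = P := by ring
    rw [hPP]
    field_simp
  refine ⟨⟨le_refl _, hT, ?_, ?_, le_of_eq hsum⟩, hsum, ?_⟩
  · -- uplink constraints
    intro j k
    constructor
    · rw [qupStarMu]
      exact div_nonneg (hx_nonneg j k) (le_of_lt hUG)
    · rw [hτq j k]
      have h1 : UpsMu P η E j * (1 + η j k * P) ≤ E j k * (η j k) ^ 2 := by
        calc UpsMu P η E j * (1 + η j k * P)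
            ≤ E j k * (η j k) ^ 2 / (1 + η j k * P) * (1 + η j k * P) :=
              mul_le_mul_of_nonneg_right (hUps_le j k) (le_of_lt (hden j k))
          _ = E j k * (η j k) ^ 2 := div_mul_cancel₀ _ (ne_of_gt (hden j k))
      rw [xStarMu, div_le_iff₀ (pow_pos (hη j k) 2)]
      exact h1
  · -- qdl nonneg
    intro j
    rw [qdlStarMu]
    have := hUps_pos j
    exact mul_nonneg (div_nonneg hGam_nonneg (by positivity)) (le_of_lt (h1S_pos j))
  · -- objective value
    have hse : ∀ j k, seMu N T Pun η (U + G) (qupStarMu U P η E) (qdlStarMu N P Pun η E) j k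
        = (1 - ((U + G : ℕ) : ℝ) / (T : ℝ)) * Real.logb 2 (1 + GamMu N P Pun η E) := by
      intro j k
      rw [seMu, hsinr j k]
    rw [objMu]
    rw [iInf_congr fun j => iInf_congr fun k => hse j k]
    rw [iInf_congr fun j => ciInf_const]
    exact ciInf_const
end
end

section
/- At the feasible point of P1 given by τ* = U+G, q_{jk}^{up*} = Υ_j (1 + η_{jk} P)/((U+G) η_{jk}²), and q_j^{dl*} = (Γ/(N Υ_j))·(1 + Σ_{t=1}^{K_j} x_{jt}* η_{jt}) with x_{jk}* = Υ_j (1 + η_{jk} P)/η_{jk}², one has SINR_{jk} = Γ for every group j and every user k; in particular, all multicast users attain exactly the same spectral efficiency SE_{jk} = (1 − (U+G)/T)·log₂(1 + Γ). -/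
open Finset

noncomputable section

/-- at the feasible point `τ* = U+G`,
`q_{jk}^{up*} = Υ_j (1+η_{jk}P)/((U+G) η_{jk}²)`,
`q_j^{dl*} = (Γ/(N Υ_j))(1 + Σ_t x_{jt}* η_{jt})`, every multicast user has
`SINR_{jk} = Γ`; in particular all multicast users attain exactly the same
spectral efficiency `SE_{jk} = (1 - (U+G)/T) log₂(1 + Γ)`. -/
theorem mmf_optimal_point_equal_sinr
    (U G : ℕ) (hG : 1 ≤ G) (K : Fin G → ℕ) (hK : ∀ j, 1 ≤ K j)
    (N : ℕ) (hN : 1 ≤ N) (T : ℕ) (hT : U + G ≤ T)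
    (P : ℝ) (hP : 0 < P)
    (η E : ∀ j : Fin G, Fin (K j) → ℝ)
    (hη : ∀ j k, 0 < η j k) (hE : ∀ j k, 0 < E j k)
    (Pun : ℝ) (hPun0 : 0 ≤ Pun) (hPunP : Pun ≤ P) :
    (∀ (j : Fin G) (k : Fin (K j)),
      sinrMu N Pun η (U + G) (qupStarMu U P η E) (qdlStarMu N P Pun η E) j k
        = GamMu N P Pun η E) ∧
    (∀ (j : Fin G) (k : Fin (K j)),
      seMu N T Pun η (U + G) (qupStarMu U P η E) (qdlStarMu N P Pun η E) j k
        = (1 - ((U + G : ℕ) : ℝ) / (T : ℝ)) * Real.logb 2 (1 + GamMu N P Pun η E)) := by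
  -- positivity of Υ_j
  have hUps : ∀ j, 0 < UpsMu P η E j := by
    intro j
    haveI : Nonempty (Fin (K j)) := ⟨⟨0, hK j⟩⟩
    obtain ⟨k, hk⟩ := exists_eq_ciInf_of_finite
      (f := fun k : Fin (K j) => E j k * (η j k) ^ 2 / (1 + η j k * P))
    rw [UpsMu, ← hk]
    have h1 : 0 < 1 + η j k * P := by nlinarith [hη j k, hP]
    exact div_pos (mul_pos (hE j k) (pow_pos (hη j k) 2)) h1
  have hτ : ((U + G : ℕ) : ℝ) ≠ 0 := Nat.cast_ne_zero.mpr (by omega)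
  -- τ * qup* = x*
  have hτq : ∀ j k, ((U + G : ℕ) : ℝ) * qupStarMu U P η E j k = xStarMu P η E j k := by
    intro j k
    rw [qupStarMu]
    field_simp
  -- S1 j := Σ_t x* η
  have hS1 : ∀ j, ∑ t, xStarMu P η E j t * η j t
      = UpsMu P η E j * (∑ t, 1 / η j t + P * (K j : ℝ)) := by
    intro j
    have : ∀ t, xStarMu P η E j t * η j t = UpsMu P η E j * (1 / η j t + P) := by
      intro t
      rw [xStarMu]
      have h := (hη j t).ne'
      field_simp
    rw [Finset.sum_congr rfl (fun t _ => this t), ← Finset.mul_sum, Finset.sum_add_distrib,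
      Finset.sum_const, Finset.card_univ, Fintype.card_fin, nsmul_eq_mul, mul_comm (K j : ℝ) P]
  have hS1pos : ∀ j, 0 < 1 + ∑ t, xStarMu P η E j t * η j t := by
    intro j
    have : 0 ≤ ∑ t, xStarMu P η E j t * η j t :=
      Finset.sum_nonneg fun t _ => mul_nonneg
        (div_nonneg (mul_nonneg (hUps j).le (by nlinarith [hη j t, (hη j t).le, hP.le]))
          (by positivity)) (hη j t).le
    linarith
  -- denominator D of Γ is positive
  set D : ℝ := P * ∑ j, (K j : ℝ) + ∑ j, 1 / UpsMu P η E j + ∑ j, ∑ t, 1 / η j t with hD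
  have hDpos : 0 < D := by
    haveI : Nonempty (Fin G) := ⟨⟨0, hG⟩⟩
    have h1 : 0 < ∑ j, 1 / UpsMu P η E j :=
      Finset.sum_pos (fun j _ => one_div_pos.mpr (hUps j)) ⟨⟨0, hG⟩, Finset.mem_univ _⟩
    have h2 : 0 ≤ P * ∑ j, (K j : ℝ) := by positivity
    have h3 : 0 ≤ ∑ j, ∑ t, 1 / η j t :=
      Finset.sum_nonneg fun j _ => Finset.sum_nonneg fun t _ => (one_div_pos.mpr (hη j t)).le
    rw [hD]; linarith
  -- sum of downlink powers equals P - Pun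
  have hsum : ∑ i, qdlStarMu N P Pun η E i = P - Pun := by
    have hNne : (N : ℝ) ≠ 0 := by exact_mod_cast Nat.one_le_iff_ne_zero.mp hN
    have : ∀ j, qdlStarMu N P Pun η E j
        = GamMu N P Pun η E / (N : ℝ) * (1 / UpsMu P η E j + ∑ t, 1 / η j t + P * (K j : ℝ)) := by
      intro j
      rw [qdlStarMu, hS1 j]
      have hU := (hUps j).ne'
      field_simp
      ring
    rw [Finset.sum_congr rfl (fun j _ => this j), ← Finset.mul_sum]
    have hsplit : ∑ j, (1 / UpsMu P η E j + ∑ t, 1 / η j t + P * (K j : ℝ)) = D := by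
      rw [hD, Finset.sum_add_distrib, Finset.sum_add_distrib, Finset.mul_sum]
      ring
    rw [hsplit, GamMu, ← hD]
    field_simp
  -- SINR = Γ
  have hsinr : ∀ (j : Fin G) (k : Fin (K j)),
      sinrMu N Pun η (U + G) (qupStarMu U P η E) (qdlStarMu N P Pun η E) j k
        = GamMu N P Pun η E := by
    intro j k
    rw [sinrMu, xiMu, hsum]
    simp only [hτq]
    rw [qdlStarMu]
    have hU := (hUps j).ne'
    have hS := (hS1pos j).ne'
    have hden : (1 : ℝ) + η j k * (Pun + (P - Pun)) = 1 + η j k * P := by ring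
    rw [hden]
    have hηP : (1 : ℝ) + η j k * P ≠ 0 := by nlinarith [hη j k, hP]
    have hNne : (N : ℝ) ≠ 0 := by exact_mod_cast Nat.one_le_iff_ne_zero.mp hN
    rw [xStarMu]
    have hηne := (hη j k).ne'
    field_simp
  refine ⟨hsinr, fun j k => ?_⟩
  rw [seMu, hsinr j k]
end
end

section
/- Shortening the pilots of P1 to their minimum length while preserving the pilot energies never decreases the objective: if (τ, {q_{jk}^{up}}, {q_j^{dl}}) is a feasible point of P1, then (U+G, {τ q_{jk}^{up}/(U+G)}, {q_j^{dl}}) is also feasible, and its objective value min_{j,k} SE_{jk} is greater than or equal to that of the original point. -/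
open Finset

noncomputable section

/-- shortening the pilots of P1 to their minimum length `U+G` while
preserving the pilot energies (`q'_{jk} = τ q_{jk}^{up}/(U+G)`) keeps feasibility and
never decreases the max–min objective. -/
theorem mmf_shorter_pilots_better
    (U G : ℕ) (hG : 1 ≤ G) (K : Fin G → ℕ) (hK : ∀ j, 1 ≤ K j)
    (N : ℕ) (hN : 1 ≤ N) (T : ℕ) (hT : U + G ≤ T)
    (P : ℝ) (hP : 0 < P)
    (η E : ∀ j : Fin G, Fin (K j) → ℝ)
    (hη : ∀ j k, 0 < η j k) (hE : ∀ j k, 0 < E j k)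
    (Pun : ℝ) (hPun0 : 0 ≤ Pun) (hPunP : Pun ≤ P)
    (τ : ℕ) (qup : ∀ j : Fin G, Fin (K j) → ℝ) (qdl : Fin G → ℝ)
    (hfeas : feasMu U T P Pun E τ qup qdl) :
    feasMu U T P Pun E (U + G)
        (fun j k => (τ : ℝ) * qup j k / ((U + G : ℕ) : ℝ)) qdl ∧
    objMu N T Pun η τ qup qdl ≤
      objMu N T Pun η (U + G)
        (fun j k => (τ : ℝ) * qup j k / ((U + G : ℕ) : ℝ)) qdl := by
  obtain ⟨h1, h2, h3, h4, h5⟩ := hfeas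
  have hUG : (0:ℝ) < ((U + G : ℕ) : ℝ) := by
    have : 0 < U + G := by omega
    exact_mod_cast this
  have hT0 : (0:ℝ) < (T : ℝ) := by
    have : 0 < T := by omega
    exact_mod_cast this
  have hkey : ∀ j k, ((U + G : ℕ) : ℝ) * ((τ : ℝ) * qup j k / ((U + G : ℕ) : ℝ))
      = (τ : ℝ) * qup j k := fun j k => by field_simp
  have hxi : ∀ j k, xiMu η (U + G) (fun j k => (τ : ℝ) * qup j k / ((U + G : ℕ) : ℝ)) j k
      = xiMu η τ qup j k := by
    intro j k
    unfold xiMu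
    simp only [hkey]
  have hsinr : ∀ j k,
      sinrMu N Pun η (U + G) (fun j k => (τ : ℝ) * qup j k / ((U + G : ℕ) : ℝ)) qdl j k
      = sinrMu N Pun η τ qup qdl j k := by
    intro j k
    unfold sinrMu
    rw [hxi]
  have hsinr_nonneg : ∀ j k, 0 ≤ sinrMu N Pun η τ qup qdl j k := by
    intro j k
    unfold sinrMu xiMu
    have hq : ∀ t, 0 ≤ (τ : ℝ) * qup j t * η j t := fun t =>
      mul_nonneg (mul_nonneg (Nat.cast_nonneg τ) (h3 j t).1) (hη j t).le
    have hden1 : (0:ℝ) ≤ 1 + ∑ t, (τ : ℝ) * qup j t * η j t := by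
      have := Finset.sum_nonneg (fun t (_ : t ∈ Finset.univ) => hq t)
      linarith
    have hxi0 : (0:ℝ) ≤ (τ : ℝ) * qup j k * (η j k) ^ 2 /
        (1 + ∑ t, (τ : ℝ) * qup j t * η j t) :=
      div_nonneg (mul_nonneg (mul_nonneg (Nat.cast_nonneg τ) (h3 j k).1) (sq_nonneg _)) hden1
    have hden2 : (0:ℝ) ≤ 1 + η j k * (Pun + ∑ i, qdl i) := by
      have hs : (0:ℝ) ≤ Pun + ∑ i, qdl i := by
        have := Finset.sum_nonneg (fun i (_ : i ∈ Finset.univ) => h4 i)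
        linarith
      nlinarith [(hη j k).le]
    exact div_nonneg (mul_nonneg (mul_nonneg (Nat.cast_nonneg N) (h4 j)) hxi0) hden2
  refine ⟨⟨le_refl _, hT, fun j k =>
      ⟨div_nonneg (mul_nonneg (Nat.cast_nonneg τ) (h3 j k).1) hUG.le, ?_⟩, h4, h5⟩, ?_⟩
  · rw [hkey]
    exact (h3 j k).2
  · have hse : ∀ j k, seMu N T Pun η τ qup qdl j k ≤
        seMu N T Pun η (U + G) (fun j k => (τ : ℝ) * qup j k / ((U + G : ℕ) : ℝ)) qdl j k := by
      intro j k
      unfold seMu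
      rw [hsinr]
      have hL : 0 ≤ Real.logb 2 (1 + sinrMu N Pun η τ qup qdl j k) := by
        apply Real.logb_nonneg (by norm_num)
        linarith [hsinr_nonneg j k]
      apply mul_le_mul_of_nonneg_right _ hL
      have hc : ((U + G : ℕ) : ℝ) / (T:ℝ) ≤ (τ : ℝ) / (T:ℝ) := by
        have hle : ((U + G : ℕ) : ℝ) ≤ (τ : ℝ) := by exact_mod_cast h1
        gcongr
      linarith
    unfold objMu
    apply ciInf_mono (Set.Finite.bddBelow (Set.finite_range _))
    intro j
    apply ciInf_mono (Set.Finite.bddBelow (Set.finite_range _))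
    intro k
    exact hse j k
end
end

section
/- Let K ≥ 1 and let c_k > 0, η_k > 0, E_k > 0 for k = 1,…,K, and set Υ = min_{1≤k≤K} c_k E_k. Then the maximum of f(x) = (min_{1≤k≤K} c_k x_k) / (1 + Σ_{t=1}^K η_t x_t) over the box {x ∈ ℝ^K : 0 ≤ x_k ≤ E_k for all k} equals Υ / (1 + Υ Σ_{t=1}^K η_t/c_t), and it is attained at the point x_k* = Υ/c_k (which satisfies 0 ≤ x_k* ≤ E_k for all k). -/
open Finset

/-- the maximum of `f(x) = (min_k c_k x_k)/(1 + Σ_t η_t x_t)` over the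
box `0 ≤ x_k ≤ E_k` equals `Υ / (1 + Υ Σ_t η_t/c_t)` with `Υ = min_k c_k E_k`, and is
attained at `x_k* = Υ/c_k`, which lies in the box. -/
theorem minOverLinear_max_on_box
    (K : ℕ) (hK : 1 ≤ K) (c η E : Fin K → ℝ)
    (hc : ∀ k, 0 < c k) (hη : ∀ k, 0 < η k) (hE : ∀ k, 0 < E k) :
    (∀ x : Fin K → ℝ, (∀ k, 0 ≤ x k ∧ x k ≤ E k) →
        (⨅ k, c k * x k) / (1 + ∑ t, η t * x t)
          ≤ (⨅ k, c k * E k) / (1 + (⨅ k, c k * E k) * ∑ t, η t / c t)) ∧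
    (∀ k, 0 ≤ (⨅ j, c j * E j) / c k ∧ (⨅ j, c j * E j) / c k ≤ E k) ∧
    (⨅ k, c k * ((⨅ j, c j * E j) / c k)) / (1 + ∑ t, η t * ((⨅ j, c j * E j) / c t))
      = (⨅ k, c k * E k) / (1 + (⨅ k, c k * E k) * ∑ t, η t / c t) := by
  haveI hne : Nonempty (Fin K) := ⟨⟨0, hK⟩⟩
  have hbdd : ∀ f : Fin K → ℝ, BddBelow (Set.range f) :=
    fun f => (Set.finite_range f).bddBelow
  set Υ : ℝ := ⨅ j, c j * E j with hΥ
  set S : ℝ := ∑ t, η t / c t with hS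
  have hΥpos : 0 < Υ := by
    obtain ⟨k0, hk0⟩ := Finite.exists_min (fun j => c j * E j)
    have : Υ = c k0 * E k0 :=
      le_antisymm (ciInf_le (hbdd _) k0) (le_ciInf hk0)
    rw [this]; exact mul_pos (hc k0) (hE k0)
  have hSpos : 0 < S := by
    apply Finset.sum_pos (fun t _ => div_pos (hη t) (hc t))
    exact univ_nonempty
  have hΥle : ∀ k, Υ ≤ c k * E k := fun k => ciInf_le (hbdd _) k
  have hden2 : (0:ℝ) < 1 + Υ * S := by positivity
  refine ⟨?_, ?_, ?_⟩
  · intro x hx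
    set m : ℝ := ⨅ k, c k * x k with hm
    have hm0 : 0 ≤ m := le_ciInf fun k => mul_nonneg (hc k).le (hx k).1
    have hmΥ : m ≤ Υ := le_ciInf fun k =>
      (ciInf_le (hbdd _) k).trans (mul_le_mul_of_nonneg_left (hx k).2 (hc k).le)
    have hmle : ∀ k, m ≤ c k * x k := fun k => ciInf_le (hbdd _) k
    have hT : m * S ≤ ∑ t, η t * x t := by
      rw [hS, Finset.mul_sum]
      apply Finset.sum_le_sum
      intro t _
      have h1 : m * (η t / c t) ≤ (c t * x t) * (η t / c t) :=
        mul_le_mul_of_nonneg_right (hmle t) (div_pos (hη t) (hc t)).le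
      have hct := (hc t).ne'
      have h2 : (c t * x t) * (η t / c t) = η t * x t := by
        field_simp
      linarith
    have hden1 : (0:ℝ) < 1 + ∑ t, η t * x t := by nlinarith
    rw [div_le_div_iff₀ hden1 hden2]
    nlinarith [mul_le_mul_of_nonneg_left hT hΥpos.le, mul_nonneg hm0 (mul_nonneg hΥpos.le hSpos.le)]
  · intro k
    constructor
    · exact (div_pos hΥpos (hc k)).le
    · rw [div_le_iff₀ (hc k), mul_comm]; exact hΥle k
  · have h1 : ∀ k, c k * (Υ / c k) = Υ := fun k => by
      rw [mul_div_assoc', mul_comm, mul_div_assoc, div_self (hc k).ne', mul_one]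
    have h2 : (⨅ k, c k * (Υ / c k)) = Υ := by
      simp only [h1, ciInf_const]
    have h3 : ∑ t, η t * (Υ / c t) = Υ * S := by
      rw [hS, Finset.mul_sum]
      exact Finset.sum_congr rfl fun t _ => by ring
    rw [h2, h3]
end
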